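/- Let S be even. The polynomial T_S(1 + z/S²) - 1 factors as c·z·(z + 2S²)·∏_{j=1}^{S/2 - 1}(z - x_j)² for some nonzero real constant c, where x_j = S²(cos(2jπ/S) - 1). -/

import Mathlib

open Real Polynomial

private lemma natDegree_T_le_aux : ∀ n : ℕ, (Polynomial.Chebyshev.T ℝ (n : ℤ)).natDegree ≤ n := by
  intro n
  induction n using Nat.strong_induction_on with
  | _ n ih =>
    match n with
    | 0 => simp [Polynomial.Chebyshev.T_zero]
    | 1 => simp [Polynomial.Chebyshev.T_one]
    | (k+2) =>
      have h2 : ((k+2 : ℕ) : ℤ) = (k : ℤ) + 2 := by push_cast; ring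
      rw [h2, Polynomial.Chebyshev.T_add_two]
      refine (natDegree_sub_le _ _).trans ?_
      have h1 : ((k : ℤ) + 1) = ((k+1 : ℕ) : ℤ) := by push_cast; ring
      have hk1 : (Polynomial.Chebyshev.T ℝ ((k:ℤ)+1)).natDegree ≤ k + 1 := by
        rw [h1]; exact ih (k+1) (by omega)
      have hk : (Polynomial.Chebyshev.T ℝ (k:ℤ)).natDegree ≤ k := ih k (by omega)
      have : (2 * X * Polynomial.Chebyshev.T ℝ ((k:ℤ)+1)).natDegree ≤ k + 2 := by
        refine (natDegree_mul_le).trans ?_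
        have : (2 * X : ℝ[X]).natDegree ≤ 1 := by
          refine (natDegree_mul_le).trans ?_
          simp
        omega
      omega

private lemma prod_split {M : Type*} [CommMonoid M] (m : ℕ) (hm : 1 ≤ m) (h : ℕ → M) :
    ∏ j ∈ Finset.Icc 0 m, h j = h 0 * (∏ j ∈ Finset.Icc 1 (m-1), h j) * h m := by
  have e1 : Finset.Icc 0 m = insert 0 (Finset.Icc 1 m) := by
    ext x; simp [Finset.mem_Icc]; omega
  have e2 : Finset.Icc 1 m = insert m (Finset.Icc 1 (m-1)) := by
    ext x; simp [Finset.mem_Icc]; omega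
  rw [e1, Finset.prod_insert (by simp), e2,
    Finset.prod_insert (by simp [Finset.mem_Icc]; omega)]
  rw [mul_comm (h m), ← mul_assoc]

private lemma sum_split {M : Type*} [AddCommMonoid M] (m : ℕ) (hm : 1 ≤ m) (h : ℕ → M) :
    ∑ j ∈ Finset.Icc 0 m, h j = h 0 + (∑ j ∈ Finset.Icc 1 (m-1), h j) + h m := by
  have e1 : Finset.Icc 0 m = insert 0 (Finset.Icc 1 m) := by
    ext x; simp [Finset.mem_Icc]; omega
  have e2 : Finset.Icc 1 m = insert m (Finset.Icc 1 (m-1)) := by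
    ext x; simp [Finset.mem_Icc]; omega
  rw [e1, Finset.sum_insert (by simp), e2,
    Finset.sum_insert (by simp [Finset.mem_Icc]; omega)]
  abel

theorem stmt10 (S : ℕ) (hS : 0 < S) (hSe : Even S) :
    ∃ c : ℝ, c ≠ 0 ∧
      (Polynomial.Chebyshev.T ℝ (S : ℤ)).comp
          (1 + Polynomial.C (((S : ℝ) ^ 2)⁻¹) * Polynomial.X) - 1 =
        Polynomial.C c * (Polynomial.X * (Polynomial.X + Polynomial.C (2 * (S : ℝ) ^ 2)) *
          ∏ j ∈ Finset.Icc 1 (S / 2 - 1),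
            (Polynomial.X -
              Polynomial.C ((S : ℝ) ^ 2 * (Real.cos (2 * j * Real.pi / S) - 1))) ^ 2) := by
  classical
  obtain ⟨m, hmm⟩ := hSe
  have hSm : S = 2 * m := by omega
  have hm1 : 1 ≤ m := by omega
  have hS2m : S / 2 = m := by omega
  have hS0 : (S : ℝ) ≠ 0 := Nat.cast_ne_zero.mpr hS.ne'
  have hS20 : ((S : ℝ) ^ 2) ≠ 0 := pow_ne_zero _ hS0
  set a : ℝ := ((S : ℝ) ^ 2)⁻¹ with ha
  set l : ℝ[X] := 1 + C a * X with hl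
  set p : ℝ[X] := (Polynomial.Chebyshev.T ℝ (S : ℤ)).comp l - 1 with hp
  set θ : ℕ → ℝ := fun j => 2 * j * π / S with hθ
  set g : ℕ → ℝ := fun j => (S : ℝ) ^ 2 * (Real.cos (θ j) - 1) with hg
  -- evaluation of l
  have hevl : ∀ x : ℝ, l.eval ((S : ℝ) ^ 2 * (x - 1)) = x := by
    intro x
    simp only [hl, ha, eval_add, eval_one, eval_mul, eval_C, eval_X]
    field_simp
    ring
  -- S * θ j = j * (2π)
  have hSθ : ∀ j : ℕ, (S : ℝ) * θ j = j * (2 * π) := by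
    intro j; simp only [hθ]; field_simp
  -- roots of p
  have hroot : ∀ j : ℕ, p.IsRoot (g j) := by
    intro j
    simp only [hp, hg, IsRoot, eval_sub, eval_one, eval_comp, hevl,
      Polynomial.Chebyshev.T_real_cos]
    push_cast
    rw [hSθ j, Real.cos_nat_mul_two_pi]
    ring
  -- p ≠ 0
  have hpne : p ≠ 0 := by
    intro h
    have h2 : p.eval ((S : ℝ) ^ 2 * (Real.cos (π / S) - 1)) = -2 := by
      simp only [hp, eval_sub, eval_one, eval_comp, hevl,
        Polynomial.Chebyshev.T_real_cos]
      push_cast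
      rw [show (S : ℝ) * (π / S) = π by field_simp, Real.cos_pi]
      norm_num
    rw [h] at h2; simp at h2
  -- derivative of p
  have hld : derivative l = C a := by
    rw [hl]; simp
  have hdp : derivative p = C a * (derivative (Polynomial.Chebyshev.T ℝ (S : ℤ))).comp l := by
    rw [hp, derivative_sub, derivative_one, sub_zero, derivative_comp, hld]
  -- sin θ j ≠ 0 for interior j
  have hsinne : ∀ j ∈ Finset.Icc 1 (m - 1), Real.sin (θ j) ≠ 0 := by
    intro j hj
    simp only [Finset.mem_Icc] at hj
    have h1 : 0 < θ j := by
      simp only [hθ]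
      apply div_pos
      · have : (0:ℝ) < (j:ℝ) := by exact_mod_cast (by omega : 0 < j)
        positivity
      · exact_mod_cast hS
    have h2 : θ j < π := by
      simp only [hθ]
      rw [div_lt_iff₀ (by exact_mod_cast hS)]
      have hj2 : (2 * j : ℝ) < S := by exact_mod_cast (by omega : 2 * j < S)
      calc 2 * (j:ℝ) * π = π * (2 * j) := by ring
        _ < π * S := by
          apply mul_lt_mul_of_pos_left hj2 Real.pi_pos
        _ = π * S := rfl
    exact (Real.sin_pos_of_pos_of_lt_pi h1 h2).ne'
  -- derivative roots at interior points
  have hdroot : ∀ j ∈ Finset.Icc 1 (m - 1), (derivative p).IsRoot (g j) := by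
    intro j hj
    have hU : (Polynomial.Chebyshev.U ℝ ((S : ℤ) - 1)).eval (Real.cos (θ j)) = 0 := by
      have := Polynomial.Chebyshev.U_real_cos (θ j) ((S : ℤ) - 1)
      have hcast : (((S : ℤ) - 1 : ℤ) : ℝ) + 1 = (S : ℝ) := by push_cast; ring
      rw [hcast, hSθ j] at this
      rw [show (j : ℝ) * (2 * π) = (2 * j : ℕ) * π by push_cast; ring,
        Real.sin_nat_mul_pi] at this
      exact (mul_eq_zero.mp this).resolve_right (hsinne j hj)
    simp only [IsRoot, hdp, eval_mul, eval_C, eval_comp, hg, hevl,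
      Polynomial.Chebyshev.T_derivative_eq_U, eval_intCast, Int.cast_natCast, hU]
    ring
  -- multiplicity ≥ 2 at interior points
  have hmult2 : ∀ j ∈ Finset.Icc 1 (m - 1), (X - C (g j)) ^ 2 ∣ p := by
    intro j hj
    have h2 : 1 < p.rootMultiplicity (g j) := by
      apply lt_rootMultiplicity_of_isRoot_iterate_derivative_of_mem_nonZeroDivisors' hpne
      · intro k hk
        interval_cases k
        · simpa using hroot j
        · simpa using hdroot j hj
      · intro k hk hk0
        refine mem_nonZeroDivisors_of_ne_zero ?_
        exact_mod_cast hk0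
    calc (X - C (g j)) ^ 2 ∣ (X - C (g j)) ^ (p.rootMultiplicity (g j)) :=
          pow_dvd_pow _ h2
      _ ∣ p := p.pow_rootMultiplicity_dvd _
  -- simple divisibility at all roots
  have hmult1 : ∀ j : ℕ, (X - C (g j)) ∣ p := fun j => dvd_iff_isRoot.mpr (hroot j)
  -- the factors
  set μ : ℕ → ℕ := fun j => if j = 0 ∨ j = m then 1 else 2 with hμ
  set f : ℕ → ℝ[X] := fun j => (X - C (g j)) ^ (μ j) with hf
  have hfdvd : ∀ j ∈ Finset.Icc 0 m, f j ∣ p := by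
    intro j hj
    simp only [Finset.mem_Icc] at hj
    by_cases h0 : j = 0 ∨ j = m
    · simp only [hf, hμ, if_pos h0, pow_one]; exact hmult1 j
    · simp only [hf, hμ, if_neg h0]
      exact hmult2 j (by simp only [Finset.mem_Icc]; push_neg at h0; omega)
  -- injectivity of g on Icc 0 m
  have hginj : ∀ i ∈ Finset.Icc 0 m, ∀ j ∈ Finset.Icc 0 m, i ≠ j → g i ≠ g j := by
    intro i hi j hj hij
    simp only [Finset.mem_Icc] at hi hj
    intro hgij
    have hcos : Real.cos (θ i) = Real.cos (θ j) := by
      have := hgij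
      simp only [hg] at this
      have := mul_left_cancel₀ hS20 this
      linarith
    have hθmem : ∀ k : ℕ, k ≤ m → θ k ∈ Set.Icc 0 π := by
      intro k hk
      constructor
      · simp only [hθ]; positivity
      · simp only [hθ]
        rw [div_le_iff₀ (by exact_mod_cast hS)]
        have hk2 : (2 * k : ℝ) ≤ S := by exact_mod_cast (by omega : 2 * k ≤ S)
        calc 2 * (k:ℝ) * π = π * (2 * k) := by ring
          _ ≤ π * S := by
            exact mul_le_mul_of_nonneg_left hk2 Real.pi_pos.le
          _ = π * S := rfl
    have hθeq : θ i = θ j :=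
      Real.injOn_cos (hθmem i hi.2) (hθmem j hj.2) hcos
    apply hij
    simp only [hθ] at hθeq
    have : (i : ℝ) = j := by
      field_simp at hθeq
      linarith [hθeq]
    exact_mod_cast this
  -- pairwise coprimality
  have hcop : (↑(Finset.Icc 0 m) : Set ℕ).Pairwise (Function.onFun IsCoprime f) := by
    intro i hi j hj hij
    simp only [Function.onFun, hf]
    exact (isCoprime_X_sub_C_of_isUnit_sub
      (isUnit_iff_ne_zero.mpr (sub_ne_zero_of_ne
        (hginj i (by exact_mod_cast hi) j (by exact_mod_cast hj) hij)))).pow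
  -- the full divisor
  set D : ℝ[X] := ∏ j ∈ Finset.Icc 0 m, f j with hD
  have hDdvd : D ∣ p := Finset.prod_dvd_of_coprime hcop hfdvd
  have hfm : ∀ j, (f j).Monic := fun j => (monic_X_sub_C _).pow _
  have hDm : D.Monic := monic_prod_of_monic _ _ (fun j _ => hfm j)
  -- degree of D
  have hDdeg : D.natDegree = S := by
    have h1 : D.natDegree = ∑ j ∈ Finset.Icc 0 m, (f j).natDegree :=
      natDegree_prod _ _ (fun j _ => (hfm j).ne_zero)
    have h2 : ∀ j, (f j).natDegree = μ j := by
      intro j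
      simp [hf, natDegree_pow, natDegree_X_sub_C]
    rw [h1]
    simp only [h2]
    rw [sum_split m hm1 μ]
    have hμ0 : μ 0 = 1 := by simp [hμ]
    have hμm : μ m = 1 := by simp [hμ]
    have hμint : ∀ j ∈ Finset.Icc 1 (m - 1), μ j = 2 := by
      intro j hj
      simp only [Finset.mem_Icc] at hj
      have hne : ¬(j = 0 ∨ j = m) := by omega
      simp [hμ, hne]
    rw [Finset.sum_congr rfl hμint, hμ0, hμm, Finset.sum_const, Nat.card_Icc]
    simp only [smul_eq_mul]
    omega
  -- degree of p
  have hpdeg : p.natDegree = S := by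
    have hle : p.natDegree ≤ S := by
      have h1 : ((Polynomial.Chebyshev.T ℝ (S : ℤ)).comp l).natDegree ≤ S := by
        refine natDegree_comp_le.trans ?_
        have hlle : l.natDegree ≤ 1 := by
          simp only [hl]
          refine (natDegree_add_le _ _).trans ?_
          simp [natDegree_C_mul_le]
          exact (natDegree_mul_le).trans (by simp)
        calc (Polynomial.Chebyshev.T ℝ (S : ℤ)).natDegree * l.natDegree
            ≤ S * 1 := Nat.mul_le_mul (natDegree_T_le_aux S) hlle
          _ = S := by omega
      simp only [hp]
      exact (natDegree_sub_le _ _).trans (by simpa using h1)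
    have hge : S ≤ p.natDegree := by
      rw [← hDdeg]
      exact natDegree_le_of_dvd hDdvd hpne
    omega
  -- extract the constant
  obtain ⟨q, hq⟩ := hDdvd
  have hqne : q ≠ 0 := by
    rintro rfl
    rw [mul_zero] at hq
    exact hpne hq
  have hqdeg : q.natDegree = 0 := by
    have := natDegree_mul hDm.ne_zero hqne
    rw [← hq, hpdeg, hDdeg] at this
    omega
  obtain ⟨c, rfl⟩ : ∃ c : ℝ, C c = q := ⟨q.coeff 0, (eq_C_of_natDegree_eq_zero hqdeg).symm⟩
  have hcne : c ≠ 0 := by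
    rintro rfl
    simp at hqne
  refine ⟨c, hcne, ?_⟩
  -- identify D with the explicit product
  have hD' : D = X * (X + C (2 * (S : ℝ) ^ 2)) *
      ∏ j ∈ Finset.Icc 1 (m - 1), (X - C (g j)) ^ 2 := by
    rw [hD, prod_split m hm1 f]
    have hf0 : f 0 = X := by
      have hg0 : g 0 = 0 := by simp [hg, hθ]
      simp [hf, hμ, hg0]
    have hfmm : f m = X + C (2 * (S : ℝ) ^ 2) := by
      have hgm : g m = -(2 * (S : ℝ) ^ 2) := by
        have : θ m = π := by
          simp only [hθ]
          rw [hSm]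
          push_cast
          field_simp
        simp [hg, this, Real.cos_pi]
        ring
      simp [hf, hμ, hgm, sub_neg_eq_add]
    have hfint : ∀ j ∈ Finset.Icc 1 (m - 1), f j = (X - C (g j)) ^ 2 := by
      intro j hj
      simp only [Finset.mem_Icc] at hj
      have hne : ¬(j = 0 ∨ j = m) := by omega
      simp [hf, hμ, hne]
    rw [hf0, hfmm, Finset.prod_congr rfl hfint]
    ring
  rw [hq, hD', hS2m]
  have : ∀ j : ℕ, g j = (S : ℝ) ^ 2 * (Real.cos (2 * j * π / S) - 1) := fun j => rfl
  simp only [this]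
  ring
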